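/- For finitely supported real sequences b = {b_I}, β = {β_J}, any fixed choice of signs σ ∈ {−1,+1}^𝒟, and any J ∈ 𝒟, one has ‖P^{0,0}_b (P^{σ,1,0}_β h_J)‖_2² = β_J² Σ_{I∈𝒟, J⊊I} b_I² · |J|/|I|; moreover, when the σ_J are independent uniform ±1 random variables, for every f ∈ L²(ℝ), E ‖P^{0,0}_b (P^{σ,1,0}_β f)‖_2² = Σ_{J∈𝒟} ⟨f, h_J⟩² β_J² Σ_{I∈𝒟, J⊊I} b_I² · |J|/|I|. -/

import Mathlib

open MeasureTheory ProbabilityTheory Real Filter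
open scoped ENNReal

attribute [local instance] Classical.propDecidable

noncomputable section

namespace RandomParaproducts

/-- Dyadic intervals: `(n, k)` represents `[k·2ⁿ, (k+1)·2ⁿ)`. -/
abbrev D : Type := ℤ × ℤ

/-- The length `2ⁿ` of the dyadic interval `(n, k)`. -/
def len (I : D) : ℝ := (2 : ℝ) ^ I.1

/-- The dyadic interval `[k·2ⁿ, (k+1)·2ⁿ)` as a subset of `ℝ`. -/
def ival (I : D) : Set ℝ := Set.Ico ((I.2 : ℝ) * (2 : ℝ) ^ I.1) (((I.2 : ℝ) + 1) * (2 : ℝ) ^ I.1)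

/-- The left half of a dyadic interval. -/
def lc (I : D) : D := (I.1 - 1, 2 * I.2)

/-- The right half of a dyadic interval. -/
def rc (I : D) : D := (I.1 - 1, 2 * I.2 + 1)

/-- The `L²`-normalized Haar function `h_I = h⁰_I`. -/
def haar (I : D) : ℝ → ℝ := fun x =>
  (Real.sqrt (len I))⁻¹ *
    ((ival (rc I)).indicator (fun _ => (1 : ℝ)) x - (ival (lc I)).indicator (fun _ => (1 : ℝ)) x)

/-- The function `h¹_I = |h_I| = |I|^{-1/2} 1_I`. -/
def haar1 (I : D) : ℝ → ℝ := fun x =>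
  (Real.sqrt (len I))⁻¹ * (ival I).indicator (fun _ => (1 : ℝ)) x

/-- `h^ε_I`, where `false` codes the exponent `0` and `true` codes the exponent `1`. -/
def hfun : Bool → D → ℝ → ℝ
  | false => haar
  | true => haar1

/-- The inner product `⟨f, g⟩ = ∫ f g` on `L²(ℝ)`. -/
def ip (f g : ℝ → ℝ) : ℝ := ∫ x, f x * g x

/-- The paraproduct `P^{ε,δ}_b f = ∑_I b_I ⟨f, h^δ_I⟩ h^ε_I` with finitely supported
numerical symbol `b`. -/
def P (e d : Bool) (b : D →₀ ℝ) (f : ℝ → ℝ) : ℝ → ℝ := fun x =>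
  ∑ I ∈ b.support, b I * ip f (hfun d I) * hfun e I x

/-- The signed paraproduct `P^{σ,ε,δ}_b f = ∑_I σ_I b_I ⟨f, h^δ_I⟩ h^ε_I`. -/
def Psig (σ : D → ℝ) (e d : Bool) (b : D →₀ ℝ) (f : ℝ → ℝ) : ℝ → ℝ := fun x =>
  ∑ I ∈ b.support, σ I * (b I * ip f (hfun d I) * hfun e I x)

/-- The square of the `L²(ℝ)` norm, `‖g‖₂² = ∫ g²`. -/
def l2normSq (g : ℝ → ℝ) : ℝ := ∫ x, (g x) ^ 2

/-- The Carleson norm of a sequence `a` whose nonzero entries lie in the finite set `s`: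
`sup_J (|J|⁻¹ ∑_{I ⊆ J} a_I² |I|)^{1/2}`. -/
def carlOn (s : Finset D) (a : D → ℝ) : ℝ :=
  ⨆ J : D, Real.sqrt ((len J)⁻¹ *
    ∑ I ∈ s.filter (fun I => ival I ⊆ ival J), (a I) ^ 2 * len I)

/-- `μ` is the law of independent uniformly distributed random signs `{σ_I : I ∈ 𝒟}`. -/
def IsSignMeasure (μ : Measure (D → ℝ)) : Prop :=
  IsProbabilityMeasure μ ∧
    iIndepFun (m := fun _ : D => (inferInstance : MeasurableSpace ℝ)) (fun I σ => σ I) μ ∧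
    ∀ I : D, μ.map (fun σ => σ I) =
      (2⁻¹ : ℝ≥0∞) • (Measure.dirac (1 : ℝ) + Measure.dirac (-1 : ℝ))

/-- `f` is a unit vector of `L²(ℝ)`. -/
def UnitL2 (f : ℝ → ℝ) : Prop := MemLp f 2 volume ∧ eLpNorm f 2 volume = 1

/-- The operator norm on `L²(ℝ)` of a map defined on functions. -/
def opNorm (T : (ℝ → ℝ) → ℝ → ℝ) : ℝ :=
  ⨆ f : {f : ℝ → ℝ // UnitL2 f}, Real.sqrt (l2normSq (T f.1))

/-- The averaged operator norm `sup_{‖f‖₂ = 1} (𝔼 ‖T_σ f‖₂²)^{1/2}`. -/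
def avgOpNorm (μ : Measure (D → ℝ)) (T : (D → ℝ) → (ℝ → ℝ) → ℝ → ℝ) : ℝ :=
  ⨆ f : {f : ℝ → ℝ // UnitL2 f}, Real.sqrt (∫ σ, l2normSq (T σ f.1) ∂μ)

/-- `b` is the finite linear combination of Haar functions with coefficients `c`. -/
def FinHaar (b : ℝ → ℝ) (c : D →₀ ℝ) : Prop :=
  b = fun x => ∑ I ∈ c.support, c I * haar I x

/-- The paraproduct `P^{ε,γ}_{b,α} f = ∑_{I} (⟨b, h^α_I⟩/|I|^{1/2}) ⟨f, h^γ_I⟩ h^ε_I` with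
function symbol `b`, the sum extended over a finite set `s` containing all the
nonvanishing terms. -/
def Pb (s : Finset D) (e g a : Bool) (b : ℝ → ℝ) (f : ℝ → ℝ) : ℝ → ℝ := fun x =>
  ∑ I ∈ s, (ip b (hfun a I) / Real.sqrt (len I)) * ip f (hfun g I) * hfun e I x

lemma measurableSet_ival (I : D) : MeasurableSet (ival I) := measurableSet_Ico

lemma volume_ival_ne_top (I : D) : volume (ival I) ≠ ⊤ := by
  simp only [ival, Real.volume_Ico]; exact ENNReal.ofReal_ne_top

lemma memℒp_haar (I : D) : MemLp (haar I) 2 volume := by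
  have h1 : MemLp ((ival (rc I)).indicator (fun _ => (1 : ℝ))) 2 volume :=
    memLp_indicator_const 2 (measurableSet_ival _) 1 (Or.inr (volume_ival_ne_top _))
  have h2 : MemLp ((ival (lc I)).indicator (fun _ => (1 : ℝ))) 2 volume :=
    memLp_indicator_const 2 (measurableSet_ival _) 1 (Or.inr (volume_ival_ne_top _))
  exact ((h1.sub h2).const_mul ((Real.sqrt (len I))⁻¹))

/-- The Haar function `h_I` as an element of `L²(ℝ)`. -/
def haarLp (I : D) : Lp ℝ 2 (volume : Measure ℝ) := (memℒp_haar I).toLp (haar I)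

/-- The random Haar multiplier `T_σ f = ∑_{I ∈ 𝒟} σ_I ⟨f, h_I⟩ h_I`, as an element of
`L²(ℝ)`; the (infinite) sum converges unconditionally in `L²`. -/
def Tfull (σ : D → ℝ) (g : ℝ → ℝ) : Lp ℝ 2 (volume : Measure ℝ) :=
  ∑' I : D, (σ I * ip g (haar I)) • haarLp I

/-- The composition `M_b T_σ M_β` applied to `f`, as a function. -/
def MbTM (σ : D → ℝ) (b β f : ℝ → ℝ) : ℝ → ℝ := fun x =>
  b x * (Tfull σ fun y => β y * f y) x

lemma two_zpow_split (n : ℤ) : (2:ℝ) ^ n = 2 * 2 ^ (n - 1) := by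
  have h := zpow_add_one₀ (two_ne_zero (α := ℝ)) (n - 1)
  rw [sub_add_cancel] at h
  rw [h]; ring

lemma len_pos (I : D) : 0 < len I := zpow_pos two_pos _

lemma ival_nonempty (I : D) : (ival I).Nonempty := by
  refine Set.nonempty_Ico.2 ?_
  have := len_pos I
  unfold len at this
  nlinarith [this]

lemma volume_ival (I : D) : volume (ival I) = ENNReal.ofReal (len I) := by
  rw [ival, Real.volume_Ico]
  congr 1
  unfold len; ring

lemma volume_ival_toReal (I : D) : (volume (ival I)).toReal = len I := by
  rw [volume_ival, ENNReal.toReal_ofReal (len_pos I).le]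

lemma lc_endpoints : ∀ I : D, ival (lc I) = Set.Ico ((I.2 : ℝ) * 2 ^ I.1)
    ((I.2 : ℝ) * 2 ^ I.1 + 2 ^ (I.1 - 1)) := by
  intro I
  unfold ival lc
  have h := two_zpow_split I.1
  congr 1 <;> push_cast <;> rw [h] <;> ring

lemma rc_endpoints : ∀ I : D, ival (rc I) = Set.Ico ((I.2 : ℝ) * 2 ^ I.1 + 2 ^ (I.1 - 1))
    (((I.2 : ℝ) + 1) * 2 ^ I.1) := by
  intro I
  unfold ival rc
  have h := two_zpow_split I.1
  congr 1 <;> push_cast <;> rw [h] <;> ring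

lemma children_union (I : D) : ival (lc I) ∪ ival (rc I) = ival I := by
  rw [lc_endpoints, rc_endpoints, ival]
  rw [Set.Ico_union_Ico_eq_Ico]
  · linarith [zpow_pos (two_pos (α := ℝ)) (I.1 - 1)]
  · have h := two_zpow_split I.1
    nlinarith [zpow_pos (two_pos (α := ℝ)) (I.1 - 1)]

lemma children_disjoint (I : D) : Disjoint (ival (lc I)) (ival (rc I)) := by
  rw [lc_endpoints, rc_endpoints]
  exact Set.Ico_disjoint_Ico_same

lemma lc_subset (I : D) : ival (lc I) ⊆ ival I := by
  rw [← children_union I]; exact Set.subset_union_left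

lemma rc_subset (I : D) : ival (rc I) ⊆ ival I := by
  rw [← children_union I]; exact Set.subset_union_right

lemma len_lc (I : D) : len (lc I) = len I / 2 := by
  unfold len lc
  simp only
  rw [zpow_sub_one₀ two_ne_zero]
  ring

lemma len_rc (I : D) : len (rc I) = len I / 2 := by
  unfold len rc
  simp only
  rw [zpow_sub_one₀ two_ne_zero]
  ring

lemma subset_or_disjoint {I K : D} (h : I.1 ≤ K.1) :
    ival I ⊆ ival K ∨ Disjoint (ival I) (ival K) := by
  obtain ⟨m, j⟩ := I; obtain ⟨n, k⟩ := K
  simp only at h ⊢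
  set t : ℕ := (n - m).toNat with ht
  have hnm : n = m + t := by omega
  have hpow : (2:ℝ) ^ n = 2 ^ m * 2 ^ t := by
    rw [hnm, zpow_add₀ (two_ne_zero (α := ℝ)), zpow_natCast]
  have h2m : (0:ℝ) < 2 ^ m := zpow_pos two_pos m
  by_cases hin : k * 2 ^ t ≤ j ∧ j + 1 ≤ (k + 1) * 2 ^ t
  · left
    apply Set.Ico_subset_Ico
    · have : ((k:ℝ) * 2 ^ t) ≤ (j:ℝ) := by exact_mod_cast hin.1
      simp only [ival, hpow]
      nlinarith
    · have : ((j:ℝ) + 1) ≤ ((k:ℝ) + 1) * 2 ^ t := by exact_mod_cast hin.2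
      simp only [ival, hpow]
      nlinarith
  · right
    rw [ival, ival, Set.Ico_disjoint_Ico]
    rcases not_and_or.1 hin with hl | hr
    · push_neg at hl
      have hl' : j + 1 ≤ k * 2 ^ t := by omega
      have : ((j:ℝ) + 1) ≤ (k:ℝ) * 2 ^ t := by exact_mod_cast hl'
      have key : ((j:ℝ) + 1) * 2 ^ m ≤ (k:ℝ) * 2 ^ n := by rw [hpow]; nlinarith
      calc min (((j:ℝ)+1) * 2 ^ m) (((k:ℝ)+1) * 2 ^ n) ≤ ((j:ℝ)+1) * 2 ^ m := min_le_left _ _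
        _ ≤ (k:ℝ) * 2 ^ n := key
        _ ≤ max ((j:ℝ) * 2 ^ m) ((k:ℝ) * 2 ^ n) := le_max_right _ _
    · push_neg at hr
      have hr' : (k + 1) * 2 ^ t ≤ j := by omega
      have : ((k:ℝ) + 1) * 2 ^ t ≤ (j:ℝ) := by exact_mod_cast hr'
      have key : ((k:ℝ) + 1) * 2 ^ n ≤ (j:ℝ) * 2 ^ m := by rw [hpow]; nlinarith
      calc min (((j:ℝ)+1) * 2 ^ m) (((k:ℝ)+1) * 2 ^ n) ≤ ((k:ℝ)+1) * 2 ^ n := min_le_right _ _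
        _ ≤ (j:ℝ) * 2 ^ m := key
        _ ≤ max ((j:ℝ) * 2 ^ m) ((k:ℝ) * 2 ^ n) := le_max_left _ _

lemma trichotomy (I K : D) :
    ival I ⊆ ival K ∨ ival K ⊆ ival I ∨ Disjoint (ival I) (ival K) := by
  rcases le_total I.1 K.1 with h | h
  · rcases subset_or_disjoint h with h' | h'
    · exact Or.inl h'
    · exact Or.inr (Or.inr h')
  · rcases subset_or_disjoint h with h' | h'
    · exact Or.inr (Or.inl h')
    · exact Or.inr (Or.inr h'.symm)

lemma endpoints_of_subset {I K : D} (h : ival I ⊆ ival K) :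
    (K.2 : ℝ) * 2 ^ K.1 ≤ (I.2 : ℝ) * 2 ^ I.1 ∧
      ((I.2 : ℝ) + 1) * 2 ^ I.1 ≤ ((K.2 : ℝ) + 1) * 2 ^ K.1 := by
  have hne := ival_nonempty I
  have hlt : (I.2 : ℝ) * 2 ^ I.1 < ((I.2 : ℝ) + 1) * 2 ^ I.1 := Set.nonempty_Ico.1 hne
  have h1 : (I.2 : ℝ) * 2 ^ I.1 ∈ ival K := h (Set.left_mem_Ico.2 hlt)
  rw [ival, Set.mem_Ico] at h1
  refine ⟨h1.1, ?_⟩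
  by_contra hc
  push_neg at hc
  have hx : ((K.2 : ℝ) + 1) * 2 ^ K.1 ∈ ival I := by
    rw [ival, Set.mem_Ico]
    exact ⟨by linarith [h1.2], hc⟩
  have := h hx
  rw [ival, Set.mem_Ico] at this
  linarith [this.2]

lemma scale_le_of_subset {I K : D} (h : ival I ⊆ ival K) : I.1 ≤ K.1 := by
  obtain ⟨h1, h2⟩ := endpoints_of_subset h
  have hlen : (2:ℝ) ^ I.1 ≤ 2 ^ K.1 := by nlinarith
  exact le_of_not_gt fun hc => absurd hlen (not_le.2 (zpow_lt_zpow_right₀ one_lt_two hc))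

lemma ival_inj {I K : D} (h : ival I = ival K) : I = K := by
  have h1 := endpoints_of_subset h.le
  have h2 := endpoints_of_subset h.ge
  have hm : I.1 = K.1 := le_antisymm (scale_le_of_subset h.le) (scale_le_of_subset h.ge)
  have h2m : (0:ℝ) < 2 ^ I.1 := zpow_pos two_pos _
  have hk : (I.2 : ℝ) = K.2 := by rw [hm] at h1 h2 h2m; nlinarith [h1.1, h2.1]
  exact Prod.ext hm (by exact_mod_cast hk)

lemma ssubset_child {I K : D} (h : ival I ⊆ ival K) (hne : I ≠ K) :
    ival I ⊆ ival (lc K) ∨ ival I ⊆ ival (rc K) := by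
  have hm : I.1 ≤ K.1 := scale_le_of_subset h
  have hmlt : I.1 < K.1 := by
    rcases lt_or_eq_of_le hm with h' | h'
    · exact h'
    · exfalso
      obtain ⟨h1, h2⟩ := endpoints_of_subset h
      have h2m : (0:ℝ) < 2 ^ K.1 := zpow_pos two_pos _
      rw [h'] at h1 h2
      have : (I.2 : ℝ) = K.2 := by nlinarith
      exact hne (Prod.ext h' (by exact_mod_cast this))
  have hml : I.1 ≤ (lc K).1 := by simp [lc]; omega
  have hmr : I.1 ≤ (rc K).1 := by simp [rc]; omega
  rcases subset_or_disjoint hml with hs | hd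
  · exact Or.inl hs
  rcases subset_or_disjoint hmr with hs | hd'
  · exact Or.inr hs
  exfalso
  have : Disjoint (ival I) (ival K) := by
    rw [← children_union K]
    exact Set.disjoint_union_right.2 ⟨hd, hd'⟩
  obtain ⟨x, hx⟩ := ival_nonempty I
  exact this.ne_of_mem hx (h hx) rfl

def ind (I : D) : ℝ → ℝ := (ival I).indicator (fun _ => (1 : ℝ))

def v (A B : D) : ℝ := (volume (ival A ∩ ival B)).toReal

lemma ind_mul_ind (A B : D) (x : ℝ) :
    ind A x * ind B x = (ival A ∩ ival B).indicator (fun _ => (1 : ℝ)) x := by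
  unfold ind
  rw [← Set.inter_indicator_mul]
  simp

lemma integrable_ind_mul (A B : D) : Integrable (fun x => ind A x * ind B x) volume := by
  simp_rw [ind_mul_ind]
  rw [integrable_indicator_iff ((measurableSet_ival A).inter (measurableSet_ival B))]
  refine integrableOn_const ?_ (by simp)
  refine ne_of_lt ?_
  calc volume (ival A ∩ ival B) ≤ volume (ival A) := measure_mono Set.inter_subset_left
    _ < ⊤ := by rw [volume_ival]; exact ENNReal.ofReal_lt_top

lemma integral_ind_mul (A B : D) : ∫ x, ind A x * ind B x = v A B := by
  simp_rw [ind_mul_ind]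
  rw [integral_indicator ((measurableSet_ival A).inter (measurableSet_ival B))]
  simp [v]
  rfl

lemma v_self (A : D) : v A A = len A := by
  rw [v, Set.inter_self, volume_ival_toReal]

lemma v_of_subset_left {A B : D} (h : ival A ⊆ ival B) : v A B = len A := by
  rw [v, Set.inter_eq_self_of_subset_left h, volume_ival_toReal]

lemma v_of_subset_right {A B : D} (h : ival B ⊆ ival A) : v A B = len B := by
  rw [v, Set.inter_eq_self_of_subset_right h, volume_ival_toReal]

lemma v_of_disjoint {A B : D} (h : Disjoint (ival A) (ival B)) : v A B = 0 := by
  rw [v, Set.disjoint_iff_inter_eq_empty.1 h]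
  simp

lemma haar_expand (I K : D) : (fun x => haar I x * haar K x) =
    fun x => (Real.sqrt (len I))⁻¹ * (Real.sqrt (len K))⁻¹ *
      ((ind (rc I) x * ind (rc K) x - ind (rc I) x * ind (lc K) x) -
        (ind (lc I) x * ind (rc K) x - ind (lc I) x * ind (lc K) x)) := by
  funext x
  simp only [haar, ind]
  ring

lemma integrable_haar_mul_haar (I K : D) : Integrable (fun x => haar I x * haar K x) volume := by
  rw [haar_expand]
  exact ((((integrable_ind_mul _ _).sub (integrable_ind_mul _ _)).sub
    ((integrable_ind_mul _ _).sub (integrable_ind_mul _ _))).const_mul _)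

lemma ip_haar_haar_expand (I K : D) : ip (haar I) (haar K) =
    (Real.sqrt (len I))⁻¹ * (Real.sqrt (len K))⁻¹ *
      ((v (rc I) (rc K) - v (rc I) (lc K)) - (v (lc I) (rc K) - v (lc I) (lc K))) := by
  unfold ip
  rw [show (fun x => haar I x * haar K x) = _ from haar_expand I K]
  have i1 : Integrable (fun x => ind (rc I) x * ind (rc K) x - ind (rc I) x * ind (lc K) x)
      volume := (integrable_ind_mul _ _).sub (integrable_ind_mul _ _)
  have i2 : Integrable (fun x => ind (lc I) x * ind (rc K) x - ind (lc I) x * ind (lc K) x)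
      volume := (integrable_ind_mul _ _).sub (integrable_ind_mul _ _)
  rw [integral_const_mul, integral_sub i1 i2,
    integral_sub (integrable_ind_mul _ _) (integrable_ind_mul _ _),
    integral_sub (integrable_ind_mul _ _) (integrable_ind_mul _ _),
    integral_ind_mul, integral_ind_mul, integral_ind_mul, integral_ind_mul]

lemma h1_haar_expand (J K : D) : (fun x => haar1 J x * haar K x) =
    fun x => (Real.sqrt (len J))⁻¹ * (Real.sqrt (len K))⁻¹ *
      (ind J x * ind (rc K) x - ind J x * ind (lc K) x) := by
  funext x
  simp only [haar1, haar, ind]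
  ring

lemma integrable_haar1_mul_haar (J K : D) :
    Integrable (fun x => haar1 J x * haar K x) volume := by
  rw [h1_haar_expand]
  exact (((integrable_ind_mul _ _).sub (integrable_ind_mul _ _)).const_mul _)

lemma ip_haar1_haar_expand (J K : D) : ip (haar1 J) (haar K) =
    (Real.sqrt (len J))⁻¹ * (Real.sqrt (len K))⁻¹ * (v J (rc K) - v J (lc K)) := by
  unfold ip
  rw [show (fun x => haar1 J x * haar K x) = _ from h1_haar_expand J K]
  rw [integral_const_mul,
    integral_sub (integrable_ind_mul _ _) (integrable_ind_mul _ _),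
    integral_ind_mul, integral_ind_mul]

lemma inv_sqrt_sq (I : D) : (Real.sqrt (len I))⁻¹ * (Real.sqrt (len I))⁻¹ = (len I)⁻¹ := by
  rw [← mul_inv, Real.mul_self_sqrt (len_pos I).le]

lemma ip_comm (f g : ℝ → ℝ) : ip f g = ip g f := by
  unfold ip
  simp_rw [mul_comm]

lemma ip_haar_haar_of_ne {I K : D} (hsub : ival I ⊆ ival K) (hne : I ≠ K) :
    ip (haar I) (haar K) = 0 := by
  rw [ip_haar_haar_expand]
  have hd := children_disjoint K
  rcases ssubset_child hsub hne with hc | hc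
  · rw [v_of_disjoint (hd.mono_left ((rc_subset I).trans hc)).symm.symm,
      v_of_subset_left ((rc_subset I).trans hc),
      v_of_disjoint (hd.mono_left ((lc_subset I).trans hc)).symm.symm,
      v_of_subset_left ((lc_subset I).trans hc), len_lc, len_rc]
    ring
  · rw [v_of_subset_left ((rc_subset I).trans hc),
      v_of_disjoint (hd.symm.mono_left ((rc_subset I).trans hc)),
      v_of_subset_left ((lc_subset I).trans hc),
      v_of_disjoint (hd.symm.mono_left ((lc_subset I).trans hc)), len_lc, len_rc]
    ring

lemma ip_haar_haar_of_disjoint {I K : D} (h : Disjoint (ival I) (ival K)) :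
    ip (haar I) (haar K) = 0 := by
  rw [ip_haar_haar_expand,
    v_of_disjoint (h.mono (rc_subset I) (rc_subset K)),
    v_of_disjoint (h.mono (rc_subset I) (lc_subset K)),
    v_of_disjoint (h.mono (lc_subset I) (rc_subset K)),
    v_of_disjoint (h.mono (lc_subset I) (lc_subset K))]
  ring

lemma ip_haar_haar (I K : D) : ip (haar I) (haar K) = if I = K then 1 else 0 := by
  by_cases h : I = K
  · subst h
    rw [if_pos rfl, ip_haar_haar_expand, v_self, v_self,
      v_of_disjoint (children_disjoint I).symm, v_of_disjoint (children_disjoint I),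
      len_lc, len_rc]
    rw [sub_zero, zero_sub, sub_neg_eq_add,
      show len I / 2 + len I / 2 = len I from by ring, inv_sqrt_sq,
      inv_mul_cancel₀ (len_pos I).ne']
  · rw [if_neg h]
    rcases trichotomy I K with hs | hs | hs
    · exact ip_haar_haar_of_ne hs h
    · rw [ip_comm]
      exact ip_haar_haar_of_ne hs (Ne.symm h)
    · exact ip_haar_haar_of_disjoint hs

lemma ip_haar1_haar_sq (J K : D) :
    (ip (haar1 J) (haar K)) ^ 2 = if ival J ⊂ ival K then len J / len K else 0 := by
  by_cases hss : ival J ⊂ ival K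
  · rw [if_pos hss]
    have hne : J ≠ K := fun h => (by rw [h] at hss; exact hss.ne rfl)
    have hd := children_disjoint K
    have hip : ip (haar1 J) (haar K) = (Real.sqrt (len J))⁻¹ * (Real.sqrt (len K))⁻¹ * len J ∨
        ip (haar1 J) (haar K) = -((Real.sqrt (len J))⁻¹ * (Real.sqrt (len K))⁻¹ * len J) := by
      rcases ssubset_child hss.subset hne with hc | hc
      · right
        rw [ip_haar1_haar_expand, v_of_disjoint (hd.mono_left hc), v_of_subset_left hc]
        ring
      · left
        rw [ip_haar1_haar_expand, v_of_subset_left hc,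
          v_of_disjoint (hd.symm.mono_left hc)]
        ring
    have hsq : ((Real.sqrt (len J))⁻¹ * (Real.sqrt (len K))⁻¹ * len J) ^ 2 =
        len J / len K := by
      have h0 : ((Real.sqrt (len J))⁻¹ * (Real.sqrt (len K))⁻¹ * len J) ^ 2 =
          ((Real.sqrt (len J))⁻¹ * (Real.sqrt (len J))⁻¹) *
            (((Real.sqrt (len K))⁻¹ * (Real.sqrt (len K))⁻¹) * len J ^ 2) := by ring
      rw [h0, inv_sqrt_sq, inv_sqrt_sq]
      have h3 := (len_pos J).ne'
      have h4 := (len_pos K).ne'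
      field_simp
    rcases hip with h | h
    · rw [h]; exact hsq
    · rw [h, neg_sq]; exact hsq
  · rw [if_neg hss]
    have hz : ip (haar1 J) (haar K) = 0 := by
      rcases trichotomy J K with hs | hs | hs
      · have : ival J = ival K := hs.antisymm (by
          by_contra hc
          exact hss ⟨hs, hc⟩)
        have : J = K := ival_inj this
        subst this
        rw [ip_haar1_haar_expand, v_of_subset_right (rc_subset J),
          v_of_subset_right (lc_subset J), len_lc, len_rc]
        ring
      · rw [ip_haar1_haar_expand, v_of_subset_right ((rc_subset K).trans hs),
          v_of_subset_right ((lc_subset K).trans hs), len_lc, len_rc]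
        ring
      · rw [ip_haar1_haar_expand,
          v_of_disjoint (hs.mono le_rfl (rc_subset K)),
          v_of_disjoint (hs.mono le_rfl (lc_subset K))]
        ring
    rw [hz]
    ring

lemma l2normSq_sum (s : Finset D) (d : D → ℝ) :
    l2normSq (fun x => ∑ I ∈ s, d I * haar I x) = ∑ I ∈ s, d I ^ 2 := by
  unfold l2normSq
  have h1 : ∀ x : ℝ, (∑ I ∈ s, d I * haar I x) ^ 2 =
      ∑ I ∈ s, ∑ K ∈ s, d I * d K * (haar I x * haar K x) := by
    intro x
    rw [sq, Finset.sum_mul_sum]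
    exact Finset.sum_congr rfl fun I _ => Finset.sum_congr rfl fun K _ => by ring
  simp_rw [h1]
  rw [integral_finset_sum _ fun I _ => integrable_finset_sum _ fun K _ =>
    (integrable_haar_mul_haar I K).const_mul _]
  have h2 : ∀ I ∈ s, (∫ x, ∑ K ∈ s, d I * d K * (haar I x * haar K x)) = d I ^ 2 := by
    intro I hI
    rw [integral_finset_sum _ fun K _ => (integrable_haar_mul_haar I K).const_mul _]
    have h3 : ∀ K ∈ s, (∫ x, d I * d K * (haar I x * haar K x)) =
        d I * d K * (if I = K then 1 else 0) := by
      intro K _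
      rw [integral_const_mul, ← ip_haar_haar]
      rfl
    rw [Finset.sum_congr rfl h3]
    simp only [mul_ite, mul_one, mul_zero]
    rw [Finset.sum_ite_eq s I (fun K => d I * d K), if_pos hI, sq]
  exact Finset.sum_congr rfl h2
lemma psig_haar (σ : D → ℝ) (β : D →₀ ℝ) (J : D) :
    Psig σ true false β (haar J) = fun x => (σ J * β J) * haar1 J x := by
  funext x
  unfold Psig
  show (∑ K ∈ β.support, σ K * (β K * ip (haar J) (haar K) * haar1 K x)) = _
  rw [Finset.sum_eq_single J]
  · rw [ip_haar_haar, if_pos rfl]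
    ring
  · intro K _ hK
    rw [ip_haar_haar, if_neg fun h => hK h.symm]
    ring
  · intro hJ
    rw [Finsupp.notMem_support_iff.1 hJ]
    ring

lemma l2normSq_P (b : D →₀ ℝ) (g : ℝ → ℝ) :
    l2normSq (P false false b g) = ∑ I ∈ b.support, (b I * ip g (haar I)) ^ 2 :=
  l2normSq_sum b.support fun I => b I * ip g (haar I)

lemma ip_const_mul (c : ℝ) (u w : ℝ → ℝ) : ip (fun x => c * u x) w = c * ip u w := by
  unfold ip
  simp_rw [mul_assoc]
  exact integral_const_mul c _

theorem part1 (b β : D →₀ ℝ) (σ : D → ℝ) (hσ : ∀ I, σ I = 1 ∨ σ I = -1) (J : D) :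
    l2normSq (P false false b (Psig σ true false β (haar J))) =
      (β J) ^ 2 * ∑ I ∈ b.support.filter (fun I => ival J ⊂ ival I),
        (b I) ^ 2 * (len J / len I) := by
  rw [psig_haar, l2normSq_P]
  have h1 : ∀ I ∈ b.support,
      (b I * ip (fun x => (σ J * β J) * haar1 J x) (haar I)) ^ 2 =
        if ival J ⊂ ival I then (β J) ^ 2 * ((b I) ^ 2 * (len J / len I)) else 0 := by
    intro I _
    rw [ip_const_mul]
    have : (b I * (σ J * β J * ip (haar1 J) (haar I))) ^ 2 =
        (σ J) ^ 2 * (β J) ^ 2 * (b I) ^ 2 * (ip (haar1 J) (haar I)) ^ 2 := by ring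
    rw [this, ip_haar1_haar_sq]
    rcases hσ J with h | h <;> rw [h] <;> split_ifs <;> ring
  rw [Finset.sum_congr rfl h1, ← Finset.sum_filter, Finset.mul_sum]
lemma integrable_dirac' {f : ℝ → ℝ} (hf : Measurable f) (a : ℝ) :
    Integrable f (Measure.dirac a) := by
  refine ⟨hf.aestronglyMeasurable, ?_⟩
  unfold HasFiniteIntegral
  rw [lintegral_dirac' a (by measurability)]
  exact ENNReal.coe_lt_top

lemma integral_bern (f : ℝ → ℝ) (hf : Measurable f) :
    ∫ x, f x ∂((2⁻¹ : ℝ≥0∞) • (Measure.dirac (1 : ℝ) + Measure.dirac (-1 : ℝ))) =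
      (f 1 + f (-1)) / 2 := by
  rw [integral_smul_measure, integral_add_measure (integrable_dirac' hf 1)
    (integrable_dirac' hf (-1)), integral_dirac, integral_dirac]
  simp [ENNReal.toReal_inv]
  ring

lemma ae_sign {μ : Measure (D → ℝ)} (hμ : IsSignMeasure μ) (K : D) :
    ∀ᵐ σ ∂μ, σ K = 1 ∨ σ K = -1 := by
  have hS : MeasurableSet ({1, -1} : Set ℝ) :=
    (measurableSet_singleton _).union (measurableSet_singleton _)
  have hpre : μ ((fun σ : D → ℝ => σ K) ⁻¹' ({1, -1} : Set ℝ)ᶜ) = 0 := by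
    rw [← Measure.map_apply (measurable_pi_apply K) hS.compl, hμ.2.2 K]
    have h1 : Measure.dirac (1 : ℝ) (({1, -1} : Set ℝ)ᶜ) = 0 := by
      rw [Measure.dirac_apply' _ hS.compl]
      simp
    have h2 : Measure.dirac (-1 : ℝ) (({1, -1} : Set ℝ)ᶜ) = 0 := by
      rw [Measure.dirac_apply' _ hS.compl]
      simp
    simp [Measure.smul_apply, Measure.add_apply, h1, h2]
  rw [ae_iff]
  have hset : {σ : D → ℝ | ¬(σ K = 1 ∨ σ K = -1)} =
      (fun σ : D → ℝ => σ K) ⁻¹' ({1, -1} : Set ℝ)ᶜ := by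
    ext σ
    simp [Set.mem_preimage]
  rw [hset]
  exact hpre

lemma integrable_eval {μ : Measure (D → ℝ)} (hμ : IsSignMeasure μ) (K : D) :
    Integrable (fun σ : D → ℝ => σ K) μ := by
  haveI := hμ.1
  refine Integrable.mono' (integrable_const (1:ℝ))
    (measurable_pi_apply K).aestronglyMeasurable ?_
  filter_upwards [ae_sign hμ K] with σ h
  rcases h with h | h <;> rw [h] <;> simp

lemma integrable_eval_mul {μ : Measure (D → ℝ)} (hμ : IsSignMeasure μ) (K L : D) :
    Integrable (fun σ : D → ℝ => σ K * σ L) μ := by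
  haveI := hμ.1
  refine Integrable.mono' (integrable_const (1:ℝ))
    ((measurable_pi_apply K).mul (measurable_pi_apply L)).aestronglyMeasurable ?_
  filter_upwards [ae_sign hμ K, ae_sign hμ L] with σ h1 h2
  rcases h1 with h1 | h1 <;> rcases h2 with h2 | h2 <;> rw [h1, h2] <;> norm_num

lemma sign_integral_mul {μ : Measure (D → ℝ)} (hμ : IsSignMeasure μ) (K L : D) :
    ∫ σ, σ K * σ L ∂μ = if K = L then 1 else 0 := by
  by_cases h : K = L
  · subst h
    rw [if_pos rfl]
    have : ∫ σ, σ K * σ K ∂μ = ∫ x, x * x ∂(μ.map (fun σ : D → ℝ => σ K)) := by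
      rw [integral_map (measurable_pi_apply K).aemeasurable
        ((measurable_id'.mul measurable_id' : Measurable fun x : ℝ => x * x)).aestronglyMeasurable]
    rw [this, hμ.2.2 K, integral_bern (fun x : ℝ => x * x) (measurable_id'.mul measurable_id' : Measurable fun x : ℝ => x * x)]
    norm_num
  · rw [if_neg h]
    have hind : IndepFun (fun σ : D → ℝ => σ K) (fun σ : D → ℝ => σ L) μ :=
      hμ.2.1.indepFun h
    have := hind.integral_mul_eq_mul_integral (integrable_eval hμ K).aestronglyMeasurable
        (integrable_eval hμ L).aestronglyMeasurable
    have heval : ∀ M : D, ∫ σ, σ M ∂μ = 0 := by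
      intro M
      have : ∫ σ, σ M ∂μ = ∫ x, x ∂(μ.map (fun σ : D → ℝ => σ M)) := by
        rw [integral_map (measurable_pi_apply M).aemeasurable
          (measurable_id' : Measurable fun x : ℝ => x).aestronglyMeasurable]
      rw [this, hμ.2.2 M, integral_bern _ (measurable_id' : Measurable fun x : ℝ => x)]
      norm_num
    calc ∫ σ, σ K * σ L ∂μ = integral μ ((fun σ : D → ℝ => σ K) * fun σ => σ L) := rfl
      _ = (∫ σ, σ K ∂μ) * ∫ σ, σ L ∂μ := this
      _ = 0 := by rw [heval K, heval L]; ring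
lemma ip_psig (σ : D → ℝ) (β : D →₀ ℝ) (f : ℝ → ℝ) (I : D) :
    ip (Psig σ true false β f) (haar I) =
      ∑ K ∈ β.support, σ K * (β K * ip f (haar K)) * ip (haar1 K) (haar I) := by
  unfold ip Psig
  have h1 : ∀ x : ℝ, (∑ K ∈ β.support, σ K * (β K * ip f (hfun false K) * hfun true K x))
      * haar I x = ∑ K ∈ β.support,
        σ K * (β K * ip f (haar K)) * (haar1 K x * haar I x) := by
    intro x
    rw [Finset.sum_mul]
    exact Finset.sum_congr rfl fun K _ => by show σ K * (β K * ip f (haar K) * haar1 K x) * haar I x = _; ring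
  simp_rw [h1]
  rw [integral_finset_sum _ fun K _ => (integrable_haar1_mul_haar K I).const_mul _]
  exact Finset.sum_congr rfl fun K _ => integral_const_mul _ _

theorem part2 (b β : D →₀ ℝ) (μ : Measure (D → ℝ)) (hμ : IsSignMeasure μ)
    (f : ℝ → ℝ) :
    ∫ σ, l2normSq (P false false b (Psig σ true false β f)) ∂μ =
      ∑ J ∈ β.support, (ip f (haar J)) ^ 2 * (β J) ^ 2 *
        ∑ I ∈ b.support.filter (fun I => ival J ⊂ ival I),
          (b I) ^ 2 * (len J / len I) := by
  haveI := hμ.1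
  have hA : ∀ σ : D → ℝ, l2normSq (P false false b (Psig σ true false β f)) =
      ∑ I ∈ b.support, ∑ K ∈ β.support, ∑ L ∈ β.support,
        σ K * σ L * ((b I) ^ 2 * (β K * ip f (haar K)) * (β L * ip f (haar L)) *
          (ip (haar1 K) (haar I) * ip (haar1 L) (haar I))) := by
    intro σ
    rw [l2normSq_P]
    refine Finset.sum_congr rfl fun I _ => ?_
    rw [ip_psig]
    rw [sq, mul_mul_mul_comm, Finset.sum_mul_sum]
    rw [Finset.mul_sum]
    refine Finset.sum_congr rfl fun K _ => ?_
    rw [Finset.mul_sum]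
    exact Finset.sum_congr rfl fun L _ => by ring
  simp_rw [hA]
  rw [integral_finset_sum _ fun I _ => integrable_finset_sum _ fun K _ =>
    integrable_finset_sum _ fun L _ => (integrable_eval_mul hμ K L).mul_const _]
  have hB : ∀ I ∈ b.support,
      (∫ σ, ∑ K ∈ β.support, ∑ L ∈ β.support,
        σ K * σ L * ((b I) ^ 2 * (β K * ip f (haar K)) * (β L * ip f (haar L)) *
          (ip (haar1 K) (haar I) * ip (haar1 L) (haar I))) ∂μ) =
      ∑ K ∈ β.support, (b I) ^ 2 * (β K * ip f (haar K)) ^ 2 *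
        (ip (haar1 K) (haar I)) ^ 2 := by
    intro I _
    rw [integral_finset_sum _ fun K _ => integrable_finset_sum _ fun L _ =>
      (integrable_eval_mul hμ K L).mul_const _]
    refine Finset.sum_congr rfl fun K hK => ?_
    rw [integral_finset_sum _ fun L _ => (integrable_eval_mul hμ K L).mul_const _]
    have h2 : ∀ L ∈ β.support,
        (∫ σ, σ K * σ L * ((b I) ^ 2 * (β K * ip f (haar K)) * (β L * ip f (haar L)) *
          (ip (haar1 K) (haar I) * ip (haar1 L) (haar I))) ∂μ) =
        if K = L then (b I) ^ 2 * (β K * ip f (haar K)) * (β L * ip f (haar L)) *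
          (ip (haar1 K) (haar I) * ip (haar1 L) (haar I)) else 0 := by
      intro L _
      rw [integral_mul_const, sign_integral_mul hμ, ite_mul, one_mul, zero_mul]
    rw [Finset.sum_congr rfl h2, Finset.sum_ite_eq β.support K, if_pos hK]
    ring
  rw [Finset.sum_congr rfl hB, Finset.sum_comm]
  refine Finset.sum_congr rfl fun K _ => ?_
  have h3 : ∀ I ∈ b.support,
      (b I) ^ 2 * (β K * ip f (haar K)) ^ 2 * (ip (haar1 K) (haar I)) ^ 2 =
        if ival K ⊂ ival I then
          (ip f (haar K)) ^ 2 * (β K) ^ 2 * ((b I) ^ 2 * (len K / len I)) else 0 := by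
    intro I _
    rw [ip_haar1_haar_sq]
    split_ifs <;> ring
  rw [Finset.sum_congr rfl h3, ← Finset.sum_filter, Finset.mul_sum]
/-- `‖P^{0,0}_b (P^{σ,1,0}_β h_J)‖₂² = β_J² ∑_{I ⊋ J} b_I² |J|/|I|` for any
fixed signs, and `𝔼 ‖P^{0,0}_b (P^{σ,1,0}_β f)‖₂² = ∑_J ⟨f, h_J⟩² β_J² ∑_{I ⊋ J} b_I² |J|/|I|`
for independent uniform random signs. -/
theorem statement8 (b β : D →₀ ℝ) :
    (∀ σ : D → ℝ, (∀ I, σ I = 1 ∨ σ I = -1) → ∀ J : D,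
      l2normSq (P false false b (Psig σ true false β (haar J))) =
        (β J) ^ 2 * ∑ I ∈ b.support.filter (fun I => ival J ⊂ ival I),
          (b I) ^ 2 * (len J / len I)) ∧
    (∀ μ : Measure (D → ℝ), IsSignMeasure μ → ∀ f : ℝ → ℝ, MemLp f 2 volume →
      ∫ σ, l2normSq (P false false b (Psig σ true false β f)) ∂μ =
        ∑ J ∈ β.support, (ip f (haar J)) ^ 2 * (β J) ^ 2 *
          ∑ I ∈ b.support.filter (fun I => ival J ⊂ ival I),
            (b I) ^ 2 * (len J / len I)) := by
  constructor
  · intro σ hσ J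
    exact part1 b β σ hσ J
  · intro μ hμ f _
    exact part2 b β μ hμ f

end RandomParaproducts
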